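/- arXiv:1405.3146 — 10 statements merged into one kernel-verified Lean document; each statement's English description precedes it below -/
import Mathlib

section
/- For every real number x and every integer k ≥ 1, F_k(x)² − x·F_{k−1}(x)² = F_{2k}(x). -/
/-- The two-variable Fibonacci polynomials: `F_0 = F_1 = 1`, `F_2 = 1 - z`,
`F_k = F_{k-1} - x F_{k-2}` for `k ≥ 3`. -/
noncomputable def fibPoly (x z : ℝ) : ℕ → ℝ
  | 0 => 1
  | 1 => 1
  | 2 => 1 - z
  | (k + 3) => fibPoly x z (k + 2) - x * fibPoly x z (k + 1)

lemma fibPoly_rec (x : ℝ) (n : ℕ) :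
    fibPoly x x (n + 2) = fibPoly x x (n + 1) - x * fibPoly x x n := by
  match n with
  | 0 => simp [fibPoly]
  | (m + 1) => rfl

lemma fibPoly_add (x : ℝ) (a b : ℕ) :
    fibPoly x x (a + b + 2) =
      fibPoly x x (a + 1) * fibPoly x x (b + 1) - x * fibPoly x x a * fibPoly x x b := by
  induction b using Nat.twoStepInduction generalizing a with
  | zero =>
    simp only [Nat.add_zero, fibPoly_rec x a]
    simp [fibPoly]
  | one =>
    have h1 := fibPoly_rec x (a + 1)
    have h2 := fibPoly_rec x a
    show fibPoly x x (a + 1 + 2) = _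
    rw [h1, h2]
    simp [fibPoly]; ring
  | more b ih1 ih2 =>
    have h : a + (b + 2) + 2 = (a + b + 2) + 2 := by ring
    have h' : a + b + 2 + 1 = a + (b + 1) + 2 := by ring
    rw [h, fibPoly_rec, ih1, h', ih2, show b + 2 + 1 = b + 1 + 2 from rfl, fibPoly_rec x (b + 1), fibPoly_rec x b]
    ring

/-- For every real `x` and every `k ≥ 1`,
`F_k(x)² − x·F_{k−1}(x)² = F_{2k}(x)`, where `F_k(x) = F_k(x,x)`. -/
theorem stmt_1 (x : ℝ) (k : ℕ) (hk : 1 ≤ k) :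
    (fibPoly x x k) ^ 2 - x * (fibPoly x x (k - 1)) ^ 2 = fibPoly x x (2 * k) := by
  obtain ⟨a, rfl⟩ := Nat.exists_eq_add_of_le hk
  have h : 2 * (1 + a) = a + a + 2 := by ring
  have h2 : 1 + a = a + 1 := by ring
  rw [h, h2, fibPoly_add x a a]
  simp
  ring
end

section
/- For all real numbers x and z with z ≠ 1, and every integer k ≥ 1, F_k(x, x/(1−z)) = F_{k+1}(x, z)/(1 − z). -/
/-- For all reals `x, z` with `z ≠ 1` and every `k ≥ 1`,
`F_k(x, x/(1−z)) = F_{k+1}(x, z)/(1 − z)`. -/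
theorem stmt_4 (x z : ℝ) (hz : z ≠ 1) (k : ℕ) (hk : 1 ≤ k) :
    fibPoly x (x / (1 - z)) k = fibPoly x z (k + 1) / (1 - z) := by
  have h1 : (1 : ℝ) - z ≠ 0 := sub_ne_zero.mpr (Ne.symm hz)
  induction k using Nat.strong_induction_on with
  | _ k ih =>
    match k, hk with
    | 1, _ => simp [fibPoly, div_self h1]
    | 2, _ =>
      show 1 - x / (1 - z) = (fibPoly x z 2 - x * fibPoly x z 1) / (1 - z)
      simp only [fibPoly]
      field_simp
    | (n + 3), _ =>
      have h2 := ih (n + 2) (by omega) (by omega)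
      have h3 := ih (n + 1) (by omega) (by omega)
      show fibPoly x _ (n + 2) - x * fibPoly x _ (n + 1) = _
      rw [h2, h3]
      show _ = (fibPoly x z (n + 3) - x * fibPoly x z (n + 2)) / (1 - z)
      ring
end

section
/- For every real number x with 0 < x < 1/4, setting C(x) = (1 − √(1 − 4x))/(2x), the sequence k ↦ F_k(x)/F_{k+2}(x) converges to (C(x) − 1)/x as k → ∞. -/
/-- For `0 < x < 1/4`, with `C(x) = (1 − √(1 − 4x))/(2x)`,
the sequence `F_k(x)/F_{k+2}(x)` converges to `(C(x) − 1)/x` as `k → ∞`. -/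
theorem stmt_9 (x : ℝ) (hx0 : 0 < x) (hx1 : x < 1 / 4) :
    Filter.Tendsto (fun k : ℕ => fibPoly x x k / fibPoly x x (k + 2))
      Filter.atTop (nhds (((1 - Real.sqrt (1 - 4 * x)) / (2 * x) - 1) / x)) := by
  set s := Real.sqrt (1 - 4 * x) with hsdef
  have hs2 : s ^ 2 = 1 - 4 * x := Real.sq_sqrt (by linarith)
  have hspos : 0 < s := Real.sqrt_pos.mpr (by linarith)
  have hs1 : s < 1 := by nlinarith
  set α : ℝ := (1 + s) / 2 with hαdef
  set β : ℝ := (1 - s) / 2 with hβdef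
  have hαpos : 0 < α := by rw [hαdef]; linarith
  have hβpos : 0 < β := by rw [hβdef]; linarith
  have hβα : β < α := by rw [hαdef, hβdef]; linarith
  have hαβ : α * β = x := by rw [hαdef, hβdef]; nlinarith
  have hα2 : α ^ 2 = α - x := by rw [hαdef]; nlinarith
  have hβ2 : β ^ 2 = β - x := by rw [hβdef]; nlinarith
  set A : ℝ := (1 + s) / (2 * s) with hAdef
  set B : ℝ := (s - 1) / (2 * s) with hBdef
  have hApos : 0 < A := by rw [hAdef]; positivity
  have hrec : ∀ n, fibPoly x x (n + 2) = fibPoly x x (n + 1) - x * fibPoly x x n := by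
    intro n
    cases n with
    | zero => simp [fibPoly]
    | succ m => rfl
  have closed : ∀ k, fibPoly x x k = A * α ^ k + B * β ^ k := by
    intro k
    induction k using Nat.twoStepInduction with
    | zero => simp [fibPoly, hAdef, hBdef]; field_simp; ring
    | one =>
      simp only [fibPoly, pow_one]
      rw [hAdef, hBdef, hαdef, hβdef]; field_simp; ring
    | more n ih1 ih2 =>
      rw [hrec n, ih1, ih2,
        show α ^ (n + 2) = α ^ n * (α - x) by rw [← hα2]; ring,
        show β ^ (n + 2) = β ^ n * (β - x) by rw [← hβ2]; ring]
      ring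
  set r : ℝ := β / α with hrdef
  have hr0 : 0 ≤ r := le_of_lt (div_pos hβpos hαpos)
  have hr1 : r < 1 := (div_lt_one hαpos).mpr hβα
  have hβr : β = α * r := by rw [hrdef]; field_simp
  have htend : Filter.Tendsto (fun k : ℕ => r ^ k) Filter.atTop (nhds 0) :=
    tendsto_pow_atTop_nhds_zero_of_lt_one hr0 hr1
  have hne : A * α ^ 2 + B * β ^ 2 * 0 ≠ 0 := by
    have : 0 < A * α ^ 2 := by positivity
    linarith
  have key : Filter.Tendsto (fun k : ℕ => (A + B * r ^ k) / (A * α ^ 2 + B * β ^ 2 * r ^ k))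
      Filter.atTop (nhds ((A + B * 0) / (A * α ^ 2 + B * β ^ 2 * 0))) :=
    ((tendsto_const_nhds.add (tendsto_const_nhds.mul htend)).div
      (tendsto_const_nhds.add (tendsto_const_nhds.mul htend)) hne)
  have heq : ∀ k : ℕ, fibPoly x x k / fibPoly x x (k + 2)
      = (A + B * r ^ k) / (A * α ^ 2 + B * β ^ 2 * r ^ k) := by
    intro k
    have hαk : α ^ k ≠ 0 := pow_ne_zero _ (ne_of_gt hαpos)
    rw [closed k, closed (k + 2)]
    have h1 : A * α ^ k + B * β ^ k = α ^ k * (A + B * r ^ k) := by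
      rw [hβr, mul_pow]; ring
    have h2 : A * α ^ (k + 2) + B * β ^ (k + 2)
        = α ^ k * (A * α ^ 2 + B * β ^ 2 * r ^ k) := by
      rw [show β ^ (k + 2) = β ^ k * β ^ 2 by ring, hβr, mul_pow]; ring
    rw [h1, h2, mul_div_mul_left _ _ hαk]
  clear_value s α β A B r
  have hval : ((1 - s) / (2 * x) - 1) / x = (A + B * 0) / (A * α ^ 2 + B * β ^ 2 * 0) := by
    have hα2pos : 0 < α ^ 2 := by positivity
    rw [mul_zero, mul_zero, add_zero, add_zero, eq_div_iff (by positivity : A * α ^ 2 ≠ 0)]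
    have h1s : 1 - s = 2 * β := by rw [hβdef]; ring
    rw [h1s]
    have hx2 : β ^ 2 * α ^ 2 = x ^ 2 := by rw [← mul_pow, mul_comm β α, hαβ]
    field_simp
    linear_combination (-α ^ 2) * hβ2 + hx2
  rw [hval]
  exact key.congr (fun k => (heq k).symm)
end

section
/- Let M be a p×q Boolean quasi-permutation matrix (each row and each column of M contains at most one true entry), having exactly x all-false columns and y all-false rows. Then p + x = q + y, and every permutation σ of size n such that (i) the permutation matrix of σ contains M as a submatrix, and (ii) every permutation properly contained in σ as a classical pattern (i.e., contained in σ and of size strictly smaller than n) does not contain M as a submatrix of its permutation matrix, satisfies n = p + x. -/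
/-- `A` is a submatrix of `B`: rows and columns are selected via strictly
increasing index maps. -/
def IsSubmatrix {p q m n : ℕ} (A : Fin p → Fin q → Bool) (B : Fin m → Fin n → Bool) : Prop :=
  ∃ r : Fin p → Fin m, ∃ c : Fin q → Fin n,
    StrictMono r ∧ StrictMono c ∧ ∀ i j, A i j = B (r i) (c j)

/-- The permutation matrix of `σ`: entry `(i,j)` is true iff `σ j = i`
(rows numbered bottom-to-top, rows indexed by values). -/
def PermMatrix {n : ℕ} (σ : Equiv.Perm (Fin n)) : Fin n → Fin n → Bool :=
  fun i j => decide (σ j = i)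

/-- Classical pattern containment: `σ` contains `π`. -/
def PermContains {n k : ℕ} (σ : Equiv.Perm (Fin n)) (π : Equiv.Perm (Fin k)) : Prop :=
  ∃ f : Fin k → Fin n, StrictMono f ∧ ∀ i j, π i < π j ↔ σ (f i) < σ (f j)

/-- A Boolean quasi-permutation matrix: at most one true entry in each row
and each column. -/
def IsQuasiPerm {p q : ℕ} (M : Fin p → Fin q → Bool) : Prop :=
  (∀ (i : Fin p) (j₁ j₂ : Fin q), M i j₁ = true → M i j₂ = true → j₁ = j₂) ∧
  (∀ (j : Fin q) (i₁ i₂ : Fin p), M i₁ j = true → M i₂ j = true → i₁ = i₂)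

lemma key_lemma {n m p q : ℕ} (M : Fin p → Fin q → Bool) (σ : Equiv.Perm (Fin n))
    (S : Finset (Fin n)) (hm : S.card = m)
    (r : Fin p → Fin n) (c : Fin q → Fin n) (hr : StrictMono r) (hc : StrictMono c)
    (hMrc : ∀ i j, M i j = PermMatrix σ (r i) (c j))
    (hcS : ∀ j, c j ∈ S) (hrS : ∀ i, σ.symm (r i) ∈ S) :
    ∃ π : Equiv.Perm (Fin m), PermContains σ π ∧ IsSubmatrix M (PermMatrix π) := by
  classical
  set T := S.image σ with hTdef
  have hT : T.card = m := by
    rw [hTdef, Finset.card_image_of_injective _ σ.injective, hm]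
  set f := S.orderIsoOfFin hm with hfdef
  set g := T.orderIsoOfFin hT with hgdef
  have hmem : ∀ j : Fin m, σ (f j) ∈ T := fun j =>
    Finset.mem_image_of_mem σ (f j).2
  set h : Fin m → Fin m := fun j => g.symm ⟨σ (f j), hmem j⟩ with hhdef
  have hinj : Function.Injective h := by
    intro a b hab
    have := g.symm.injective hab
    have h2 : σ (f a) = σ (f b) := congrArg Subtype.val this
    exact f.injective (Subtype.ext (σ.injective h2))
  let π : Equiv.Perm (Fin m) := Equiv.ofBijective h (Finite.injective_iff_bijective.mp hinj)
  have hπ : ∀ j, (g (π j) : Fin n) = σ (f j) := by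
    intro j
    show ((g (g.symm ⟨σ (f j), hmem j⟩) : T) : Fin n) = σ (f j)
    rw [OrderIso.apply_symm_apply]
  have hmono : ∀ i j : Fin m, π i < π j ↔ σ (f i) < σ (f j) := by
    intro i j
    rw [← hπ i, ← hπ j]
    constructor
    · intro hlt
      exact Subtype.coe_lt_coe.mpr (g.strictMono hlt)
    · intro hlt
      exact g.lt_iff_lt.mp (Subtype.coe_lt_coe.mp hlt)
  refine ⟨π, ⟨fun j => (f j : Fin n), ?_, hmono⟩, ?_⟩
  · intro a b hab
    exact Subtype.coe_lt_coe.mpr (f.strictMono hab)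
  · -- submatrix
    have hrT : ∀ i, r i ∈ T := by
      intro i
      refine Finset.mem_image.mpr ⟨σ.symm (r i), hrS i, ?_⟩
      simp
    refine ⟨fun i => g.symm ⟨r i, hrT i⟩, fun j => f.symm ⟨c j, hcS j⟩, ?_, ?_, ?_⟩
    · intro a b hab
      rw [g.symm.lt_iff_lt, ← Subtype.coe_lt_coe]
      exact hr hab
    · intro a b hab
      rw [f.symm.lt_iff_lt, ← Subtype.coe_lt_coe]
      exact hc hab
    · intro i j
      rw [hMrc i j]
      show decide (σ (c j) = r i) = decide (π (f.symm ⟨c j, hcS j⟩) = g.symm ⟨r i, hrT i⟩)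
      congr 1
      apply propext
      constructor
      · intro hcr
        apply g.injective
        rw [g.apply_symm_apply]
        apply Subtype.ext
        rw [hπ]
        show σ ((f (f.symm ⟨c j, hcS j⟩) : Fin n)) = r i
        rw [f.apply_symm_apply]
        exact hcr
      · intro heq
        have := congrArg (fun z => ((g z : T) : Fin n)) heq
        rw [hπ] at this
        rw [g.apply_symm_apply] at this
        have h2 : σ ((f (f.symm ⟨c j, hcS j⟩) : Fin n)) = r i := this
        rwa [f.apply_symm_apply] at h2

/-- If `M` is a `p×q` quasi-permutation matrix with exactly `x`
all-false columns and `y` all-false rows, then `p + x = q + y`, and every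
minimal permutation containing `M` as a submatrix has size `p + x`. -/
theorem stmt_10 {p q : ℕ} (M : Fin p → Fin q → Bool) (hM : IsQuasiPerm M)
    (x y : ℕ)
    (hx : x = (Finset.univ.filter (fun j : Fin q => ∀ i : Fin p, M i j = false)).card)
    (hy : y = (Finset.univ.filter (fun i : Fin p => ∀ j : Fin q, M i j = false)).card) :
    p + x = q + y ∧
    ∀ (n : ℕ) (σ : Equiv.Perm (Fin n)),
      IsSubmatrix M (PermMatrix σ) →
      (∀ (k : ℕ) (π : Equiv.Perm (Fin k)), k < n → PermContains σ π →
        ¬ IsSubmatrix M (PermMatrix π)) →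
      n = p + x := by
  classical
  obtain ⟨hrow, hcol⟩ := hM
  have hexr : ∀ i : Fin p, (¬ ∀ j, M i j = false) → ∃ j, M i j = true := by
    intro i hi
    by_contra h2
    push_neg at h2
    exact hi fun j => by have := h2 j; revert this; cases M i j <;> simp
  have hexc : ∀ j : Fin q, (¬ ∀ i, M i j = false) → ∃ i, M i j = true := by
    intro j hj
    by_contra h2
    push_neg at h2
    exact hj fun i => by have := h2 i; revert this; cases M i j <;> simp
  have hbij : (Finset.univ.filter (fun i : Fin p => ¬ ∀ j, M i j = false)).card
      = (Finset.univ.filter (fun j : Fin q => ¬ ∀ i, M i j = false)).card := by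
    apply Finset.card_bij (fun i hi =>
      (hexr i (by simpa using (Finset.mem_filter.mp hi).2)).choose)
    · intro a ha
      have hc := (hexr a (by simpa using (Finset.mem_filter.mp ha).2)).choose_spec
      simp only [Finset.mem_filter, Finset.mem_univ, true_and]
      intro hall
      rw [hall a] at hc
      exact absurd hc (by simp)
    · intro a1 ha1 a2 ha2 heq
      have hc1 := (hexr a1 (by simpa using (Finset.mem_filter.mp ha1).2)).choose_spec
      have hc2 := (hexr a2 (by simpa using (Finset.mem_filter.mp ha2).2)).choose_spec
      rw [heq] at hc1
      exact hcol _ _ _ hc1 hc2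
    · intro b hb
      obtain ⟨a, hab⟩ := hexc b (by simpa using (Finset.mem_filter.mp hb).2)
      have haF : a ∈ Finset.univ.filter (fun i : Fin p => ¬ ∀ j, M i j = false) := by
        simp only [Finset.mem_filter, Finset.mem_univ, true_and]
        intro hall
        rw [hall b] at hab
        exact absurd hab (by simp)
      refine ⟨a, haF, ?_⟩
      have hc := (hexr a (by simpa using (Finset.mem_filter.mp haF).2)).choose_spec
      exact hrow a _ b hc hab
  have hpcount : (Finset.univ.filter (fun i : Fin p => ∀ j, M i j = false)).card
      + (Finset.univ.filter (fun i : Fin p => ¬ ∀ j, M i j = false)).card = p := by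
    rw [Finset.card_filter_add_card_filter_not]
    simp
  have hqcount : (Finset.univ.filter (fun j : Fin q => ∀ i, M i j = false)).card
      + (Finset.univ.filter (fun j : Fin q => ¬ ∀ i, M i j = false)).card = q := by
    rw [Finset.card_filter_add_card_filter_not]
    simp
  have part1 : p + x = q + y := by omega
  refine ⟨part1, ?_⟩
  rintro n σ ⟨r, c, hr, hc, hM'⟩ hmin
  have hdec : ∀ i j, M i j = true ↔ σ (c j) = r i := by
    intro i j
    rw [hM' i j]
    simp [PermMatrix]
  set Z := Finset.univ.filter (fun i : Fin p => ∀ j, M i j = false) with hZ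
  set S := Finset.univ.image c ∪ Z.image (fun i => σ.symm (r i)) with hS
  have hdisj : Disjoint (Finset.univ.image c) (Z.image (fun i => σ.symm (r i))) := by
    rw [Finset.disjoint_left]
    intro a ha hb
    obtain ⟨j, _, hj⟩ := Finset.mem_image.mp ha
    obtain ⟨i, hiZ, hi⟩ := Finset.mem_image.mp hb
    have hiz := (Finset.mem_filter.mp hiZ).2
    have : σ (c j) = r i := by
      rw [hj, ← hi]; simp
    have := (hdec i j).mpr this
    rw [hiz j] at this
    exact absurd this (by simp)
  have hScard : S.card = q + y := by
    rw [hS, Finset.card_union_of_disjoint hdisj,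
      Finset.card_image_of_injective _ hc.injective,
      Finset.card_image_of_injective _ (fun a b hab => hr.injective (σ.symm.injective hab))]
    simp [hy, hZ]
  have hcS : ∀ j, c j ∈ S := fun j =>
    Finset.mem_union_left _ (Finset.mem_image_of_mem c (Finset.mem_univ j))
  have hrS : ∀ i, σ.symm (r i) ∈ S := by
    intro i
    by_cases hiz : ∀ j, M i j = false
    · exact Finset.mem_union_right _
        (Finset.mem_image_of_mem _ (Finset.mem_filter.mpr ⟨Finset.mem_univ i, hiz⟩))
    · obtain ⟨j, hj⟩ := hexr i hiz
      have : σ (c j) = r i := (hdec i j).mp hj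
      have hcj : c j = σ.symm (r i) := by rw [← this]; simp
      exact hcj ▸ hcS j
  obtain ⟨π, hcont, hsub⟩ := key_lemma M σ S hScard r c hr hc hM' hcS hrS
  have hle : q + y ≤ n := by
    have := Finset.card_le_univ S
    rw [hScard] at this
    simpa using this
  have hnot : ¬ (q + y < n) := fun hlt => hmin (q + y) π hlt hcont hsub
  omega
end

section
/- Let M be a finite set of Boolean quasi-permutation matrices. Then the set of all permutations σ (over all sizes) such that the permutation matrix of σ contains some element of M as a submatrix, while for every permutation π properly contained in σ as a classical pattern (contained in σ and of strictly smaller size) the permutation matrix of π contains no element of M, is finite; equivalently, there is a bound N such that every such σ has size at most N. (In other words: a permutation class described by the avoidance of finitely many submatrices has a finite permutation-basis.) -/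
noncomputable def patt {n : ℕ} (σ : Equiv.Perm (Fin n)) (s : Finset (Fin n)) :
    Equiv.Perm (Fin s.card) :=
  ((s.orderIsoOfFin rfl).toEquiv.trans
    ((Equiv.Set.image σ (↑s) σ.injective).trans
      (Equiv.setCongr (Finset.coe_image).symm))).trans
    ((s.image σ).orderIsoOfFin (Finset.card_image_of_injective s σ.injective)).toEquiv.symm

lemma patt_apply {n : ℕ} (σ : Equiv.Perm (Fin n)) (s : Finset (Fin n)) (i : Fin s.card) :
    patt σ s i = ((s.image σ).orderIsoOfFin (Finset.card_image_of_injective s σ.injective)).symm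
      ⟨σ (s.orderIsoOfFin rfl i), Finset.mem_image_of_mem σ (s.orderIsoOfFin rfl i).2⟩ := by
  simp [patt, Equiv.Set.image, Equiv.Set.imageOfInjOn]
  rfl

lemma patt_contains {n : ℕ} (σ : Equiv.Perm (Fin n)) (s : Finset (Fin n)) :
    PermContains σ (patt σ s) := by
  refine ⟨fun i => s.orderIsoOfFin rfl i, ?_, ?_⟩
  · exact fun a b h => (s.orderIsoOfFin rfl).strictMono h
  · intro i j
    rw [patt_apply, patt_apply]
    rw [← OrderIso.lt_iff_lt ((s.image σ).orderIsoOfFin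
      (Finset.card_image_of_injective s σ.injective)), OrderIso.apply_symm_apply,
      OrderIso.apply_symm_apply]
    exact Iff.rfl

lemma patt_submatrix {n : ℕ} (σ : Equiv.Perm (Fin n)) (s : Finset (Fin n))
    {P Q : ℕ} (A : Fin P → Fin Q → Bool)
    (r : Fin P → Fin n) (c : Fin Q → Fin n) (hr : StrictMono r) (hc : StrictMono c)
    (hA : ∀ i j, A i j = PermMatrix σ (r i) (c j))
    (hrs : ∀ i, σ.symm (r i) ∈ s) (hcs : ∀ j, c j ∈ s) :
    IsSubmatrix A (PermMatrix (patt σ s)) := by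
  have hcard := Finset.card_image_of_injective s σ.injective
  set e := s.orderIsoOfFin rfl with he
  set e' := (s.image σ).orderIsoOfFin hcard with he'
  have hrmem : ∀ i, r i ∈ s.image σ := fun i => by
    rw [Finset.mem_image]; exact ⟨σ.symm (r i), hrs i, σ.apply_symm_apply _⟩
  refine ⟨fun i => e'.symm ⟨r i, hrmem i⟩, fun j => e.symm ⟨c j, hcs j⟩, ?_, ?_, ?_⟩
  · intro a b h
    exact e'.symm.strictMono (Subtype.mk_lt_mk.mpr (hr h))
  · intro a b h
    exact e.symm.strictMono (Subtype.mk_lt_mk.mpr (hc h))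
  · intro i j
    have h1 : (e (e.symm ⟨c j, hcs j⟩) : Fin n) = c j := by rw [OrderIso.apply_symm_apply]
    rw [hA]
    simp only [PermMatrix, patt_apply, decide_eq_decide]
    constructor
    · intro h
      apply e'.symm.injective.eq_iff.mpr
      exact Subtype.ext ((congrArg σ h1).trans h)
    · intro h
      have := congrArg (fun x => (e' x : Fin n)) h
      simp only [OrderIso.apply_symm_apply] at this
      simpa [he', he] using this

/-- For a finite family `M` of quasi-permutation matrices, the
sizes of the permutations that contain some `M i` as a submatrix, yet all of
whose proper classical patterns avoid every `M i`, are bounded: the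
permutation-basis of a class defined by finitely many excluded submatrices is
finite. -/
theorem stmt_11 {ι : Type*} [Finite ι] (p q : ι → ℕ)
    (M : ∀ i : ι, Fin (p i) → Fin (q i) → Bool) (hM : ∀ i, IsQuasiPerm (M i)) :
    ∃ N : ℕ, ∀ (n : ℕ) (σ : Equiv.Perm (Fin n)),
      (∃ i : ι, IsSubmatrix (M i) (PermMatrix σ)) →
      (∀ (k : ℕ) (π : Equiv.Perm (Fin k)), k < n → PermContains σ π →
        ∀ i : ι, ¬ IsSubmatrix (M i) (PermMatrix π)) →
      n ≤ N := by
  have := Fintype.ofFinite ι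
  refine ⟨Finset.univ.sup (fun x => p x + q x), ?_⟩
  intro n σ ⟨i, r, c, hr, hc, hA⟩ hmin
  by_contra hn
  push_neg at hn
  set s : Finset (Fin n) :=
    (Finset.univ.image (fun x => σ.symm (r x))) ∪ (Finset.univ.image c) with hs
  have hscard : s.card ≤ p i + q i := by
    calc s.card ≤ _ + _ := Finset.card_union_le _ _
    _ ≤ p i + q i := by
      gcongr <;> exact (Finset.card_image_le).trans (by simp)
  have hkn : s.card < n := by
    refine lt_of_le_of_lt (hscard.trans ?_) hn
    exact Finset.le_sup (f := fun x => p x + q x) (Finset.mem_univ i)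
  exact hmin s.card (patt σ s) hkn (patt_contains σ s) i
    (patt_submatrix σ s (M i) r c hr hc hA
      (fun x => Finset.mem_union_left _ (Finset.mem_image_of_mem _ (Finset.mem_univ x)))
      (fun x => Finset.mem_union_right _ (Finset.mem_image_of_mem _ (Finset.mem_univ x))))
end

section
/- A permutation σ (of any size n) contains at least one of the patterns 123, 132, 213 as a classical pattern if and only if the permutation matrix of σ contains as a submatrix the 2×3 Boolean matrix M_F whose row of index 0 is (1,0,0) and whose row of index 1 is (0,0,1). Consequently, the class Av(123,132,213) equals the set of permutations avoiding the single submatrix M_F. -/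
/-- The pattern 123 (0-indexed: the identity). -/
def p123 : Equiv.Perm (Fin 3) := 1

/-- The pattern 132 (0-indexed: 0↦0, 1↦2, 2↦1). -/
def p132 : Equiv.Perm (Fin 3) := Equiv.swap 1 2

/-- The pattern 213 (0-indexed: 0↦1, 1↦0, 2↦2). -/
def p213 : Equiv.Perm (Fin 3) := Equiv.swap 0 1

/-- The matrix `M_F`, with row 0 = (1,0,0) and row 1 = (0,0,1). -/
def MF : Fin 2 → Fin 3 → Bool := ![![true, false, false], ![false, false, true]]

/-- A permutation contains 123, 132 or 213 as a classical
pattern iff its permutation matrix contains `M_F` as a submatrix; hence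
`Av(123,132,213) = Av(M_F)`. -/
theorem stmt_13 (n : ℕ) (σ : Equiv.Perm (Fin n)) :
    (PermContains σ p123 ∨ PermContains σ p132 ∨ PermContains σ p213) ↔
      IsSubmatrix MF (PermMatrix σ) := by
  have key : ∀ f : Fin 3 → Fin n, StrictMono f → σ (f 0) < σ (f 2) →
      IsSubmatrix MF (PermMatrix σ) := by
    intro f hf h
    have h01 : σ (f 1) ≠ σ (f 0) := fun e => by
      have := hf.injective (σ.injective e); simp at this
    have h12 : σ (f 1) ≠ σ (f 2) := fun e => by
      have := hf.injective (σ.injective e); simp at this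
    refine ⟨![σ (f 0), σ (f 2)], f, ?_, hf, ?_⟩
    · intro a b hab
      fin_cases a <;> fin_cases b <;> simp_all
    · intro i j
      fin_cases i <;> fin_cases j <;>
        simp [MF, PermMatrix, h01, h12, h.ne, h.ne', Ne.symm h01, Ne.symm h12]
  constructor
  · rintro (⟨f, hf, hrel⟩ | ⟨f, hf, hrel⟩ | ⟨f, hf, hrel⟩)
    · exact key f hf ((hrel 0 2).mp (by decide))
    · exact key f hf ((hrel 0 2).mp (by decide))
    · exact key f hf ((hrel 0 2).mp (by decide))
  · rintro ⟨r, c, hr, hc, hM⟩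
    have e00 := hM 0 0
    have e12 := hM 1 2
    simp [MF, PermMatrix] at e00 e12
    have h02 : σ (c 0) < σ (c 2) := by
      rw [e00, e12]; exact hr (by decide)
    have h01 : σ (c 1) ≠ σ (c 0) := fun e => by
      have := hc.injective (σ.injective e); simp at this
    have h12 : σ (c 1) ≠ σ (c 2) := fun e => by
      have := hc.injective (σ.injective e); simp at this
    rcases lt_trichotomy (σ (c 1)) (σ (c 0)) with hb | hb | hb
    · refine Or.inr (Or.inr ⟨c, hc, ?_⟩)
      intro i j
      fin_cases i <;> fin_cases j <;>
        simp [p213, Equiv.swap_apply_def] <;> omega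
    · exact absurd hb h01
    · rcases lt_trichotomy (σ (c 1)) (σ (c 2)) with hb2 | hb2 | hb2
      · refine Or.inl ⟨c, hc, ?_⟩
        intro i j
        fin_cases i <;> fin_cases j <;>
          simp [p123] <;> omega
      · exact absurd hb2 h12
      · refine Or.inr (Or.inl ⟨c, hc, ?_⟩)
        intro i j
        fin_cases i <;> fin_cases j <;>
          simp [p132, Equiv.swap_apply_def] <;> omega
end

section
/- Let τ be a permutation of size k and let M_{τ,top} be the (k+1)×k Boolean matrix obtained from the permutation matrix of τ by appending an all-false row of index k (above all rows of M_τ). Then for every permutation σ of size n ≥ 1: the permutation matrix of σ contains M_{τ,top} as a submatrix if and only if there is an occurrence of τ in σ (a strictly increasing f : Fin k → Fin n with τ(i) < τ(j) ⟺ σ(f(i)) < σ(f(j))) none of whose positions f(i) carries the maximum value of σ. Equivalently, σ avoids M_{τ,top} if and only if every occurrence of τ in σ involves the position of the maximum value of σ; that is, the permutations avoiding M_{τ,top} are exactly the permutations avoiding τ to which a maximal element has been added. -/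
/-- `M_{τ,top}`: the `(k+1)×k` matrix obtained from the permutation matrix of
`τ` by appending an all-false row of index `k` (above all rows). -/
def MTop {k : ℕ} (τ : Equiv.Perm (Fin k)) : Fin (k + 1) → Fin k → Bool :=
  fun i j => decide (((τ j : ℕ)) = (i : ℕ))

/-- The permutation matrix of `σ` contains `M_{τ,top}` as a
submatrix iff `σ` has an occurrence of `τ` none of whose positions carries the
maximum value of `σ`. -/
theorem stmt_16 {k : ℕ} (τ : Equiv.Perm (Fin k)) (n : ℕ) (hn : 1 ≤ n)
    (σ : Equiv.Perm (Fin n)) :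
    IsSubmatrix (MTop τ) (PermMatrix σ) ↔
      ∃ f : Fin k → Fin n, StrictMono f ∧
        (∀ i j, τ i < τ j ↔ σ (f i) < σ (f j)) ∧
        ∀ i, ((σ (f i) : ℕ)) ≠ n - 1 := by
  constructor
  · rintro ⟨r, c, hr, hc, heq⟩
    have key : ∀ j, σ (c j) = r ((τ j).castSucc) := by
      intro j
      have := heq ((τ j).castSucc) j
      simp only [MTop, PermMatrix, decide_eq_decide] at this
      exact this.mp rfl
    refine ⟨c, hc, ?_, ?_⟩
    · intro i j
      rw [key, key, hr.lt_iff_lt, Fin.castSucc_lt_castSucc_iff]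
    · intro i
      have h1 : r ((τ i).castSucc) < r (Fin.last k) :=
        hr (Fin.castSucc_lt_last _)
      have h2 : (r (Fin.last k) : ℕ) < n := (r (Fin.last k)).isLt
      rw [key]
      have := Fin.lt_iff_val_lt_val.mp h1
      omega
  · rintro ⟨f, hf, hpat, hmax⟩
    refine ⟨fun i => if h : (i : ℕ) < k then σ (f (τ.symm ⟨i, h⟩))
      else ⟨n - 1, by omega⟩, f, ?_, hf, ?_⟩
    · intro i j hij
      rcases lt_or_ge (i : ℕ) k with hi | hi
      · rcases lt_or_ge (j : ℕ) k with hj | hj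
        · simp only [dif_pos hi, dif_pos hj]
          rw [← hpat]
          simp only [Equiv.apply_symm_apply, Fin.lt_iff_val_lt_val]
          exact hij
        · simp only [dif_pos hi, dif_neg (not_lt.mpr hj)]
          have h1 := hmax (τ.symm ⟨i, hi⟩)
          have h2 : ((σ (f (τ.symm ⟨i, hi⟩))) : ℕ) < n :=
            (σ (f (τ.symm ⟨i, hi⟩))).isLt
          exact Fin.lt_iff_val_lt_val.mpr (by simp; omega)
      · have hj : (j : ℕ) < k + 1 := j.isLt
        have : (i : ℕ) < (j : ℕ) := hij
        omega
    · intro i j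
      simp only [MTop, PermMatrix, decide_eq_decide]
      rcases lt_or_ge (i : ℕ) k with hi | hi
      · simp only [dif_pos hi]
        constructor
        · intro h
          have : τ j = ⟨i, hi⟩ := Fin.ext h
          rw [← this, Equiv.symm_apply_apply]
        · intro h
          have : f j = f (τ.symm ⟨i, hi⟩) := σ.injective h
          have : j = τ.symm ⟨i, hi⟩ := hf.injective this
          rw [this, Equiv.apply_symm_apply]
      · simp only [dif_neg (not_lt.mpr hi)]
        constructor
        · intro h
          have := (τ j).isLt
          omega
        · intro h
          exact absurd (congrArg Fin.val h) (hmax j)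
end

section
/- Let B be a set of permutations. For each τ ∈ B of size k, let M_{τ,top} be the (k+1)×k Boolean matrix obtained from the permutation matrix of τ by appending an all-false row of index k. Then for every n ≥ 1, the number of permutations σ of size n whose permutation matrix contains no M_{τ,top} (τ ∈ B) as a submatrix equals n times the number of permutations of size n−1 that avoid every τ ∈ B as a classical pattern. -/
section Aux

variable {m : ℕ}

lemma apply_succAbove_ne_last (σ : Equiv.Perm (Fin (m + 1))) (j : Fin m) :
    σ ((σ.symm (Fin.last m)).succAbove j) ≠ Fin.last m := by
  intro h
  have h2 : (σ.symm (Fin.last m)).succAbove j = σ.symm (Fin.last m) := by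
    conv_rhs => rw [← h, Equiv.symm_apply_apply]
  exact Fin.succAbove_ne _ j h2

/-- The permutation obtained from `σ` by deleting the maximum value. -/
noncomputable def delPerm (σ : Equiv.Perm (Fin (m + 1))) : Equiv.Perm (Fin m) :=
  Equiv.ofBijective
    (fun j => (σ ((σ.symm (Fin.last m)).succAbove j)).castPred (apply_succAbove_ne_last σ j))
    (by
      rw [Finite.injective_iff_bijective.symm]
      intro a b h
      have h2 : σ ((σ.symm (Fin.last m)).succAbove a)
          = σ ((σ.symm (Fin.last m)).succAbove b) := by
        have := congrArg Fin.castSucc h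
        simpa [Fin.castSucc_castPred] using this
      exact Fin.succAbove_right_injective (σ.injective h2))

lemma delPerm_apply (σ : Equiv.Perm (Fin (m + 1))) (j : Fin m) :
    (delPerm σ j).castSucc = σ ((σ.symm (Fin.last m)).succAbove j) := by
  simp [delPerm, Equiv.ofBijective, Fin.castSucc_castPred]

/-- The key lemma: `PermMatrix σ` contains `MTop τ` as a submatrix iff the
deletion of the maximum of `σ` contains `τ` as a pattern. -/
lemma mtop_iff_del {k : ℕ} (τ : Equiv.Perm (Fin k)) (σ : Equiv.Perm (Fin (m + 1))) :
    IsSubmatrix (MTop τ) (PermMatrix σ) ↔ PermContains (delPerm σ) τ := by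
  set p := σ.symm (Fin.last m) with hp
  constructor
  · rintro ⟨r, c, hr, hc, hrc⟩
    have hval : ∀ j, σ (c j) = r (τ j).castSucc := by
      intro j
      have h := (hrc (τ j).castSucc j).symm
      simpa [MTop, PermMatrix] using h
    have hcne : ∀ j, c j ≠ p := by
      intro j h
      have h1 : σ (c j) = Fin.last m := by rw [h, hp, Equiv.apply_symm_apply]
      have h2 : σ (c j) < Fin.last m := by
        rw [hval j]
        exact lt_of_lt_of_le (hr (Fin.castSucc_lt_last (τ j))) (Fin.le_last _)
      exact absurd h1 (ne_of_lt h2)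
    choose g hg using fun j => Fin.exists_succAbove_eq (hcne j)
    have hgd : ∀ j, (delPerm σ (g j)).castSucc = σ (c j) := by
      intro j
      rw [delPerm_apply, ← hp, hg]
    refine ⟨g, ?_, ?_⟩
    · intro a b hab
      have h3 : p.succAbove (g a) < p.succAbove (g b) := by
        rw [hg a, hg b]; exact hc hab
      exact Fin.succAbove_lt_succAbove_iff.mp h3
    · intro a b
      calc τ a < τ b ↔ (τ a).castSucc < (τ b).castSucc := Fin.castSucc_lt_castSucc_iff.symm
        _ ↔ r (τ a).castSucc < r (τ b).castSucc := hr.lt_iff_lt.symm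
        _ ↔ σ (c a) < σ (c b) := by rw [hval a, hval b]
        _ ↔ (delPerm σ (g a)).castSucc < (delPerm σ (g b)).castSucc := by
              rw [hgd a, hgd b]
        _ ↔ delPerm σ (g a) < delPerm σ (g b) := Fin.castSucc_lt_castSucc_iff
  · rintro ⟨f, hf, hpat⟩
    have hgd : ∀ j, σ (p.succAbove j) = (delPerm σ j).castSucc := by
      intro j; rw [delPerm_apply, ← hp]
    refine ⟨Fin.lastCases (Fin.last m) (fun i' => (delPerm σ (f (τ.symm i'))).castSucc),
      fun j => p.succAbove (f j), ?_, ?_, ?_⟩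
    · intro a b hab
      rcases Fin.eq_castSucc_or_eq_last b with ⟨b', rfl⟩ | rfl
      · rcases Fin.eq_castSucc_or_eq_last a with ⟨a', rfl⟩ | rfl
        · have ha'b' : a' < b' := Fin.castSucc_lt_castSucc_iff.mp hab
          simp only [Fin.lastCases_castSucc]
          rw [Fin.castSucc_lt_castSucc_iff]
          refine (hpat _ _).mp ?_
          simpa using ha'b'
        · exact absurd hab (by simp [Fin.lt_iff_val_lt_val])
      · rcases Fin.eq_castSucc_or_eq_last a with ⟨a', rfl⟩ | rfl
        · simp only [Fin.lastCases_castSucc, Fin.lastCases_last]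
          exact Fin.castSucc_lt_last _
        · exact absurd hab (lt_irrefl _)
    · intro a b hab
      exact Fin.succAbove_lt_succAbove_iff.mpr (hf hab)
    · intro i j
      rcases Fin.eq_castSucc_or_eq_last i with ⟨i', rfl⟩ | rfl
      · simp only [Fin.lastCases_castSucc, MTop, PermMatrix]
        rw [hgd (f j)]
        apply decide_eq_decide.mpr
        rw [Fin.castSucc_inj]
        constructor
        · intro h
          have hji : τ j = i' := Fin.ext (by simpa using h)
          have : j = τ.symm i' := by rw [← hji, Equiv.symm_apply_apply]
          rw [this]
        · intro h
          have := (delPerm σ).injective h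
          have := hf.injective this
          rw [this]; simp [Fin.ext_iff]
      · simp only [Fin.lastCases_last, MTop, PermMatrix]
        rw [hgd (f j)]
        apply decide_eq_decide.mpr
        constructor
        · intro h; exact absurd h (Nat.ne_of_lt (τ j).isLt)
        · intro h; exact absurd h (ne_of_lt (Fin.castSucc_lt_last _))

/-- Insert the maximum value at position `p`. -/
noncomputable def insPerm (p : Fin (m + 1)) (π : Equiv.Perm (Fin m)) :
    Equiv.Perm (Fin (m + 1)) :=
  Equiv.ofBijective (p.insertNth (Fin.last m) (fun j => (π j).castSucc)) (by
    rw [Finite.injective_iff_bijective.symm]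
    intro a b h
    rcases eq_or_ne a p with rfl | ha
    · rcases eq_or_ne b a with rfl | hb
      · rfl
      · obtain ⟨b', rfl⟩ := Fin.exists_succAbove_eq hb
        rw [Fin.insertNth_apply_same, Fin.insertNth_apply_succAbove] at h
        exact absurd h.symm (ne_of_lt (Fin.castSucc_lt_last _))
    · obtain ⟨a', rfl⟩ := Fin.exists_succAbove_eq ha
      rcases eq_or_ne b p with rfl | hb
      · rw [Fin.insertNth_apply_same, Fin.insertNth_apply_succAbove] at h
        exact absurd h (ne_of_lt (Fin.castSucc_lt_last _))
      · obtain ⟨b', rfl⟩ := Fin.exists_succAbove_eq hb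
        rw [Fin.insertNth_apply_succAbove, Fin.insertNth_apply_succAbove] at h
        have := π.injective (Fin.castSucc_inj.mp h)
        rw [this])

lemma insPerm_apply_same (p : Fin (m + 1)) (π : Equiv.Perm (Fin m)) :
    insPerm p π p = Fin.last m := by
  simp [insPerm, Equiv.ofBijective, Fin.insertNth_apply_same]

lemma insPerm_apply_succAbove (p : Fin (m + 1)) (π : Equiv.Perm (Fin m)) (j : Fin m) :
    insPerm p π (p.succAbove j) = (π j).castSucc := by
  simp [insPerm, Equiv.ofBijective, Fin.insertNth_apply_succAbove]

/-- The decomposition of a permutation into the position of its maximum and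
its deletion. -/
noncomputable def maxDecomp : Equiv.Perm (Fin (m + 1)) ≃ Fin (m + 1) × Equiv.Perm (Fin m) where
  toFun σ := (σ.symm (Fin.last m), delPerm σ)
  invFun x := insPerm x.1 x.2
  left_inv σ := by
    set p := σ.symm (Fin.last m) with hp
    ext x
    rcases eq_or_ne x p with rfl | hx
    · rw [insPerm_apply_same, hp, Equiv.apply_symm_apply]
    · obtain ⟨j, rfl⟩ := Fin.exists_succAbove_eq hx
      rw [insPerm_apply_succAbove, delPerm_apply, ← hp]
  right_inv := by
    rintro ⟨p, π⟩
    have h1 : (insPerm p π).symm (Fin.last m) = p := by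
      rw [Equiv.symm_apply_eq, insPerm_apply_same]
    refine Prod.ext h1 ?_
    ext j
    have h2 : (delPerm (insPerm p π) j).castSucc = (π j).castSucc := by
      rw [delPerm_apply, h1, insPerm_apply_succAbove]
    have h3 : delPerm (insPerm p π) j = π j := by
      simpa [Fin.castSucc_inj] using h2
    rw [h3]

end Aux

/-- For a set `B = {τ i}` of permutations and every `n ≥ 1`, the
number of permutations of size `n` avoiding every `M_{τ,top}` as a submatrix is
`n` times the number of permutations of size `n−1` avoiding every `τ` as a
classical pattern. -/
theorem stmt_17 {ι : Type*} (k : ι → ℕ) (τ : ∀ i : ι, Equiv.Perm (Fin (k i)))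
    (n : ℕ) (hn : 1 ≤ n) :
    Nat.card {σ : Equiv.Perm (Fin n) //
        ∀ i : ι, ¬ IsSubmatrix (MTop (τ i)) (PermMatrix σ)} =
      n * Nat.card {π : Equiv.Perm (Fin (n - 1)) // ∀ i : ι, ¬ PermContains π (τ i)} := by
  obtain ⟨m, rfl⟩ : ∃ m, n = m + 1 := ⟨n - 1, (Nat.succ_pred_eq_of_pos hn).symm⟩
  have e1 : {σ : Equiv.Perm (Fin (m + 1)) //
        ∀ i : ι, ¬ IsSubmatrix (MTop (τ i)) (PermMatrix σ)} ≃
      {σ : Equiv.Perm (Fin (m + 1)) // ∀ i : ι, ¬ PermContains (delPerm σ) (τ i)} :=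
    Equiv.subtypeEquivRight fun σ =>
      forall_congr' fun i => not_congr (mtop_iff_del (τ i) σ)
  have e2 : {σ : Equiv.Perm (Fin (m + 1)) // ∀ i : ι, ¬ PermContains (delPerm σ) (τ i)} ≃
      {x : Fin (m + 1) × Equiv.Perm (Fin m) // ∀ i : ι, ¬ PermContains x.2 (τ i)} :=
    maxDecomp.subtypeEquiv fun σ => Iff.rfl
  have e3 : {x : Fin (m + 1) × Equiv.Perm (Fin m) // ∀ i : ι, ¬ PermContains x.2 (τ i)} ≃
      Fin (m + 1) × {π : Equiv.Perm (Fin m) // ∀ i : ι, ¬ PermContains π (τ i)} :=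
    ⟨fun x => (x.1.1, ⟨x.1.2, x.2⟩), fun y => ⟨(y.1, y.2.1), y.2.2⟩,
      fun _ => rfl, fun _ => rfl⟩
  rw [Nat.card_congr ((e1.trans e2).trans e3), Nat.card_prod, Nat.card_eq_fintype_card,
    Fintype.card_fin]
  rfl
end

section
/- Let A be an m×n Boolean matrix. Then A is uniquely determined among m×n Boolean matrices by its horizontal and vertical projections — i.e., every m×n Boolean matrix B having, for each row, the same number of true entries as the corresponding row of A, and, for each column, the same number of true entries as the corresponding column of A, equals A — if and only if there exist no indices i₁ < i₂ and j₁ < j₂ such that either (A(i₁,j₁) and A(i₂,j₂) are true while A(i₁,j₂) and A(i₂,j₁) are false) or (A(i₁,j₂) and A(i₂,j₁) are true while A(i₁,j₁) and A(i₂,j₂) are false); equivalently, A contains neither S₁ = [[1,0],[0,1]] nor S₂ = [[0,1],[1,0]] as a 2×2 submatrix. -/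
/-- The horizontal projection: number of true entries in row `i`. -/
def rowCount {m n : ℕ} (A : Fin m → Fin n → Bool) (i : Fin m) : ℕ :=
  (Finset.univ.filter (fun j : Fin n => A i j = true)).card

/-- The vertical projection: number of true entries in column `j`. -/
def colCount {m n : ℕ} (A : Fin m → Fin n → Bool) (j : Fin n) : ℕ :=
  (Finset.univ.filter (fun i : Fin m => A i j = true)).card

/-- Flipping two entries whose values are opposite preserves the count. -/
private lemma flip_count {n : ℕ} (a b : Fin n → Bool) (j₁ j₂ : Fin n) (hj : j₁ ≠ j₂)
    (h1 : b j₁ = !a j₁) (h2 : b j₂ = !a j₂) (hswap : a j₁ = !a j₂)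
    (hout : ∀ j, j ≠ j₁ → j ≠ j₂ → b j = a j) :
    (Finset.univ.filter (fun j => b j = true)).card
      = (Finset.univ.filter (fun j => a j = true)).card := by
  classical
  rw [Finset.card_filter, Finset.card_filter]
  have hsub : ({j₁, j₂} : Finset (Fin n)) ⊆ Finset.univ := Finset.subset_univ _
  rw [← Finset.sum_sdiff hsub, ← Finset.sum_sdiff hsub]
  congr 1
  · apply Finset.sum_congr rfl
    intro j hjmem
    simp only [Finset.mem_sdiff, Finset.mem_insert, Finset.mem_singleton, not_or] at hjmem
    rw [hout j hjmem.2.1 hjmem.2.2]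
  · rw [Finset.sum_pair hj, Finset.sum_pair hj, h1, h2, hswap]
    cases a j₂ <;> simp

private lemma key {m n : ℕ} (A : Fin m → Fin n → Bool)
    (hA : ¬ ∃ (i₁ i₂ : Fin m) (j₁ j₂ : Fin n), i₁ < i₂ ∧ j₁ < j₂ ∧
        ((A i₁ j₁ = true ∧ A i₂ j₂ = true ∧ A i₁ j₂ = false ∧ A i₂ j₁ = false) ∨
         (A i₁ j₂ = true ∧ A i₂ j₁ = true ∧ A i₁ j₁ = false ∧ A i₂ j₂ = false)))
    (i i' : Fin m) (j j' : Fin n)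
    (h1 : A i j = true) (h2 : A i' j' = true) (h3 : A i j' = false)
    (h4 : A i' j = false) : False := by
  have hii : i ≠ i' := by rintro rfl; rw [h1] at h4; exact Bool.noConfusion h4
  have hjj : j ≠ j' := by rintro rfl; rw [h2] at h4; exact Bool.noConfusion h4
  rcases hii.lt_or_gt with hi | hi <;> rcases hjj.lt_or_gt with hj | hj
  · exact hA ⟨i, i', j, j', hi, hj, Or.inl ⟨h1, h2, h3, h4⟩⟩
  · exact hA ⟨i, i', j', j, hi, hj, Or.inr ⟨h1, h2, h3, h4⟩⟩
  · exact hA ⟨i', i, j, j', hi, hj, Or.inr ⟨h2, h1, h4, h3⟩⟩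
  · exact hA ⟨i', i, j', j, hi, hj, Or.inl ⟨h2, h1, h4, h3⟩⟩

/-- Ryser: an `m×n` Boolean matrix `A` is uniquely determined by
its horizontal and vertical projections iff it contains no 2×2 submatrix equal
to `S₁ = [[1,0],[0,1]]` or `S₂ = [[0,1],[1,0]]`. -/
theorem stmt_18 {m n : ℕ} (A : Fin m → Fin n → Bool) :
    (∀ B : Fin m → Fin n → Bool,
        (∀ i, rowCount B i = rowCount A i) → (∀ j, colCount B j = colCount A j) →
        B = A) ↔
      ¬ ∃ (i₁ i₂ : Fin m) (j₁ j₂ : Fin n), i₁ < i₂ ∧ j₁ < j₂ ∧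
        ((A i₁ j₁ = true ∧ A i₂ j₂ = true ∧ A i₁ j₂ = false ∧ A i₂ j₁ = false) ∨
         (A i₁ j₂ = true ∧ A i₂ j₁ = true ∧ A i₁ j₁ = false ∧ A i₂ j₂ = false)) := by
  classical
  constructor
  · -- uniqueness → no switch
    intro hUniq
    rintro ⟨i₁, i₂, j₁, j₂, hi, hj, hpat⟩
    set B : Fin m → Fin n → Bool :=
      fun i j => if (i = i₁ ∨ i = i₂) ∧ (j = j₁ ∨ j = j₂) then !A i j else A i j with hB
    have hBval : ∀ i j, (i = i₁ ∨ i = i₂) → (j = j₁ ∨ j = j₂) → B i j = !A i j := by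
      intro i j h1 h2; simp [hB, h1, h2]
    have hBout : ∀ i j, ¬((i = i₁ ∨ i = i₂) ∧ (j = j₁ ∨ j = j₂)) → B i j = A i j := by
      intro i j h; simp [hB, h]
    -- in each of the relevant rows, the two special entries are opposite
    have hswapRow : ∀ i, (i = i₁ ∨ i = i₂) → A i j₁ = !A i j₂ := by
      rintro i (rfl | rfl) <;> rcases hpat with ⟨p1, p2, p3, p4⟩ | ⟨p1, p2, p3, p4⟩ <;>
        simp [p1, p2, p3, p4]
    have hswapCol : ∀ j, (j = j₁ ∨ j = j₂) → A i₁ j = !A i₂ j := by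
      rintro j (rfl | rfl) <;> rcases hpat with ⟨p1, p2, p3, p4⟩ | ⟨p1, p2, p3, p4⟩ <;>
        simp [p1, p2, p3, p4]
    have hrow : ∀ i, rowCount B i = rowCount A i := by
      intro i
      by_cases hi' : i = i₁ ∨ i = i₂
      · exact flip_count (A i) (B i) j₁ j₂ hj.ne
          (hBval i j₁ hi' (Or.inl rfl)) (hBval i j₂ hi' (Or.inr rfl))
          (hswapRow i hi')
          (fun j hj1 hj2 => hBout i j (fun h => h.2.elim hj1 hj2))
      · unfold rowCount
        apply Finset.card_bij (fun j _ => j) <;> intro j <;>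
          simp_all [hBout i j (fun h => hi' h.1)]
    have hcol : ∀ j, colCount B j = colCount A j := by
      intro j
      by_cases hj' : j = j₁ ∨ j = j₂
      · exact flip_count (fun i => A i j) (fun i => B i j) i₁ i₂ hi.ne
          (hBval i₁ j (Or.inl rfl) hj') (hBval i₂ j (Or.inr rfl) hj')
          (hswapCol j hj')
          (fun i hi1 hi2 => hBout i j (fun h => h.1.elim hi1 hi2))
      · unfold colCount
        apply Finset.card_bij (fun i _ => i) <;> intro i <;>
          simp_all [hBout i j (fun h => hj' h.2)]
    have hBA : B = A := hUniq B hrow hcol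
    have : B i₁ j₁ = !A i₁ j₁ := hBval i₁ j₁ (Or.inl rfl) (Or.inl rfl)
    rw [hBA] at this
    exact (Bool.not_ne_self (A i₁ j₁)).symm this
  · -- no switch → uniqueness
    intro hA B hrow hcol
    by_contra hne
    have hSne : ∃ i, B i ≠ A i := by
      by_contra h
      push_neg at h
      exact hne (funext h)
    set S : Finset (Fin m) := Finset.univ.filter (fun i => B i ≠ A i) with hS
    have hSnonempty : S.Nonempty := by
      obtain ⟨i, hi⟩ := hSne
      exact ⟨i, by simp [hS, hi]⟩
    obtain ⟨i, hiS, hmin⟩ := S.exists_min_image (rowCount A) hSnonempty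
    have hiS' : B i ≠ A i := by simpa [hS] using hiS
    -- find j with A i j = true, B i j = false
    have hex_j : ∃ j, A i j = true ∧ B i j = false := by
      by_contra h
      push_neg at h
      have hsub : (Finset.univ.filter (fun j => A i j = true))
          ⊆ (Finset.univ.filter (fun j => B i j = true)) := by
        intro j hjm
        simp only [Finset.mem_filter, Finset.mem_univ, true_and] at hjm ⊢
        have := h j hjm
        cases hb : B i j
        · exact absurd hb this
        · rfl
      have heq := Finset.eq_of_subset_of_card_le hsub (le_of_eq (hrow i))
      apply hiS'
      funext j
      have : (B i j = true) ↔ (A i j = true) := by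
        constructor <;> intro hh <;>
          [skip; skip] <;>
        · have := Finset.ext_iff.mp heq j
          simp only [Finset.mem_filter, Finset.mem_univ, true_and] at this
          first
          | exact this.mp (by assumption)
          | exact this.mpr (by assumption)
      cases ha : A i j <;> cases hb : B i j <;> simp_all
    obtain ⟨j, hAij, hBij⟩ := hex_j
    -- find i' with B i' j = true, A i' j = false
    have hex_i' : ∃ i', B i' j = true ∧ A i' j = false := by
      by_contra h
      push_neg at h
      have hsub : (Finset.univ.filter (fun i' => B i' j = true))
          ⊆ (Finset.univ.filter (fun i' => A i' j = true)) := by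
        intro i' him
        simp only [Finset.mem_filter, Finset.mem_univ, true_and] at him ⊢
        have := h i' him
        cases ha : A i' j
        · exact absurd ha this
        · rfl
      have heq := Finset.eq_of_subset_of_card_le hsub (ge_of_eq (hcol j))
      have : i ∈ Finset.univ.filter (fun i' => B i' j = true) := by
        rw [heq]; simp [hAij]
      simp only [Finset.mem_filter, Finset.mem_univ, true_and] at this
      rw [hBij] at this
      exact Bool.noConfusion this
    obtain ⟨i', hBi'j, hAi'j⟩ := hex_i'
    have hi'S : i' ∈ S := by
      simp only [hS, Finset.mem_filter, Finset.mem_univ, true_and]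
      intro h
      rw [h, hAi'j] at hBi'j
      exact Bool.noConfusion hBi'j
    -- support of row i' strictly contained in support of row i
    have hssub : (Finset.univ.filter (fun j' => A i' j' = true))
        ⊂ (Finset.univ.filter (fun j' => A i j' = true)) := by
      constructor
      · intro j' hj'
        simp only [Finset.mem_filter, Finset.mem_univ, true_and] at hj' ⊢
        cases ha : A i j'
        · exact (key A hA i i' j j' hAij hj' ha hAi'j).elim
        · rfl
      · intro hcontra
        have : j ∈ Finset.univ.filter (fun j' => A i' j' = true) :=
          hcontra (by simp [hAij])
        simp only [Finset.mem_filter, Finset.mem_univ, true_and] at this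
        rw [hAi'j] at this
        exact Bool.noConfusion this
    have hlt : rowCount A i' < rowCount A i := Finset.card_lt_card hssub
    exact absurd (hmin i' hi'S) (not_le.mpr hlt)
end

section
/- Let M be the 2×4 Boolean matrix whose row of index 0 is (1,1,0,1) and whose row of index 1 is (1,0,0,1) (rows numbered bottom-to-top). Then there are infinitely many polyominoes Q such that M is a submatrix of Q and every proper polyomino submatrix of Q (a submatrix of Q that is itself a polyomino and has strictly fewer rows or strictly fewer columns than Q) does not contain M as a submatrix. Concretely: for every natural number N there exists such a polyomino Q whose number of rows plus number of columns exceeds N. (Hence the polyomino class Av_P(M) has an infinite polyomino-basis.) -/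
/-- Two cells are 4-adjacent: they agree in one coordinate and differ by
exactly 1 in the other. -/
def CellAdj {m n : ℕ} (c d : Fin m × Fin n) : Prop :=
  ((c.1 : ℕ) = (d.1 : ℕ) ∧ ((c.2 : ℕ) + 1 = (d.2 : ℕ) ∨ (d.2 : ℕ) + 1 = (c.2 : ℕ))) ∨
  ((c.2 : ℕ) = (d.2 : ℕ) ∧ ((c.1 : ℕ) + 1 = (d.1 : ℕ) ∨ (d.1 : ℕ) + 1 = (c.1 : ℕ)))

/-- One step between true cells of `P`. -/
def CellStep {m n : ℕ} (P : Fin m → Fin n → Bool) (c d : Fin m × Fin n) : Prop :=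
  P c.1 c.2 = true ∧ P d.1 d.2 = true ∧ CellAdj c d

/-- `P` is a polyomino: nonempty, 4-connected set of true cells, touching all
four sides of its bounding rectangle. -/
def IsPolyomino {m n : ℕ} (P : Fin m → Fin n → Bool) : Prop :=
  0 < m ∧ 0 < n ∧
  (∃ i j, P i j = true) ∧
  (∀ c d : Fin m × Fin n, P c.1 c.2 = true → P d.1 d.2 = true →
    Relation.ReflTransGen (CellStep P) c d) ∧
  (∃ (i : Fin m) (j : Fin n), (i : ℕ) = 0 ∧ P i j = true) ∧
  (∃ (i : Fin m) (j : Fin n), (i : ℕ) = m - 1 ∧ P i j = true) ∧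
  (∃ (i : Fin m) (j : Fin n), (j : ℕ) = 0 ∧ P i j = true) ∧
  (∃ (i : Fin m) (j : Fin n), (j : ℕ) = n - 1 ∧ P i j = true)

/-- The matrix `M` with row 0 = (1,1,0,1) and row 1 = (1,0,0,1)
(rows numbered bottom-to-top). -/
def M19 : Fin 2 → Fin 4 → Bool :=
  ![![true, true, false, true], ![true, false, false, true]]

-- Shape H: column 0 full; column 1 has rows {0, m-1}; column j (2 ≤ j ≤ m) has rows
-- {m-j, m-j+1} (expressed additively: i + j = m or i + j = m+1).
def Pm (m i j : ℕ) : Prop :=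
  j = 0 ∨ (j = 1 ∧ (i = 0 ∨ i = m - 1)) ∨ (2 ≤ j ∧ (i + j = m ∨ i + j = m + 1))

instance (m i j : ℕ) : Decidable (Pm m i j) := by unfold Pm; infer_instance

def Qm (m : ℕ) : Fin m → Fin (m+1) → Bool := fun i j => decide (Pm m i.val j.val)

lemma Qm_true {m : ℕ} {i : Fin m} {j : Fin (m+1)} : Qm m i j = true ↔ Pm m i.val j.val :=
  decide_eq_true_iff

lemma Qm_false {m : ℕ} {i : Fin m} {j : Fin (m+1)} : Qm m i j = false ↔ ¬ Pm m i.val j.val :=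
  decide_eq_false_iff_not

lemma step_mk {m : ℕ} {i j i' j' : ℕ} (hi : i < m) (hj : j < m+1) (hi' : i' < m) (hj' : j' < m+1)
    (h1 : Pm m i j) (h2 : Pm m i' j')
    (hadj : (i = i' ∧ (j + 1 = j' ∨ j' + 1 = j)) ∨ (j = j' ∧ (i + 1 = i' ∨ i' + 1 = i))) :
    CellStep (Qm m) (⟨i, hi⟩, ⟨j, hj⟩) (⟨i', hi'⟩, ⟨j', hj'⟩) :=
  ⟨Qm_true.mpr h1, Qm_true.mpr h2, hadj⟩

lemma reach_col {m : ℕ} (hm : 5 ≤ m) :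
    ∀ k i (hi : i < m), i ≤ k →
      Relation.ReflTransGen (CellStep (Qm m)) (⟨i, hi⟩, ⟨0, by omega⟩)
        ((⟨0, by omega⟩ : Fin m), (⟨0, by omega⟩ : Fin (m+1))) := by
  intro k
  induction k with
  | zero =>
    intro i hi hle
    have h0 : i = 0 := by omega
    subst h0
    exact Relation.ReflTransGen.refl
  | succ k ih =>
    intro i hi hle
    by_cases h0 : i = 0
    · subst h0; exact Relation.ReflTransGen.refl
    · have hstep : CellStep (Qm m) (⟨i, hi⟩, ⟨0, by omega⟩) (⟨i-1, by omega⟩, ⟨0, by omega⟩) :=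
        step_mk _ _ _ _ (Or.inl rfl) (Or.inl rfl) (Or.inr ⟨rfl, Or.inr (by omega)⟩)
      exact Relation.ReflTransGen.head hstep (ih (i-1) (by omega) (by omega))

lemma reach_stair {m : ℕ} (hm : 5 ≤ m) :
    ∀ d i j (hi : i < m) (hj : j < m+1), 2 ≤ j → i + j = m → m - 1 - i ≤ d →
      Relation.ReflTransGen (CellStep (Qm m)) (⟨i, hi⟩, ⟨j, hj⟩)
        ((⟨0, by omega⟩ : Fin m), (⟨0, by omega⟩ : Fin (m+1))) := by
  intro d
  induction d with
  | zero =>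
    intro i j hi hj h2 hsum hd
    exact absurd hd (by omega)
  | succ d ih =>
    intro i j hi hj h2 hsum hd
    have hi1 : i + 1 < m := by omega
    have s1 : CellStep (Qm m) (⟨i, hi⟩, ⟨j, hj⟩) (⟨i+1, hi1⟩, ⟨j, hj⟩) :=
      step_mk _ _ _ _ (Or.inr (Or.inr ⟨h2, Or.inl hsum⟩))
        (Or.inr (Or.inr ⟨h2, Or.inr (by omega)⟩)) (Or.inr ⟨rfl, Or.inl rfl⟩)
    by_cases hj2 : j = 2
    · subst hj2
      have s2 : CellStep (Qm m) (⟨i+1, hi1⟩, ⟨2, hj⟩) (⟨i+1, hi1⟩, ⟨1, by omega⟩) :=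
        step_mk _ _ _ _ (Or.inr (Or.inr ⟨le_refl 2, Or.inr (by omega)⟩))
          (Or.inr (Or.inl ⟨rfl, Or.inr (by omega)⟩)) (Or.inl ⟨rfl, Or.inr rfl⟩)
      have s3 : CellStep (Qm m) (⟨i+1, hi1⟩, ⟨1, by omega⟩) (⟨i+1, hi1⟩, ⟨0, by omega⟩) :=
        step_mk _ _ _ _ (Or.inr (Or.inl ⟨rfl, Or.inr (by omega)⟩)) (Or.inl rfl)
          (Or.inl ⟨rfl, Or.inr rfl⟩)
      exact Relation.ReflTransGen.head s1 (Relation.ReflTransGen.head s2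
        (Relation.ReflTransGen.head s3 (reach_col hm (i+1) (i+1) hi1 le_rfl)))
    · have s2 : CellStep (Qm m) (⟨i+1, hi1⟩, ⟨j, hj⟩) (⟨i+1, hi1⟩, ⟨j-1, by omega⟩) :=
        step_mk _ _ _ _ (Or.inr (Or.inr ⟨h2, Or.inr (by omega)⟩))
          (Or.inr (Or.inr ⟨by omega, Or.inl (by omega)⟩)) (Or.inl ⟨rfl, Or.inr (by omega)⟩)
      exact Relation.ReflTransGen.head s1 (Relation.ReflTransGen.head s2
        (ih (i+1) (j-1) hi1 (by omega) (by omega) (by omega) (by omega)))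

lemma reach_all {m : ℕ} (hm : 5 ≤ m) (i : Fin m) (j : Fin (m+1)) (h : Qm m i j = true) :
    Relation.ReflTransGen (CellStep (Qm m)) (i, j)
      ((⟨0, by omega⟩ : Fin m), (⟨0, by omega⟩ : Fin (m+1))) := by
  obtain ⟨i, hi⟩ := i; obtain ⟨j, hj⟩ := j
  have hp : Pm m i j := Qm_true.mp h
  rcases hp with h0 | ⟨h1, hio⟩ | ⟨h2, hsum⟩
  · subst h0; exact reach_col hm i i hi le_rfl
  · subst h1
    rcases hio with hi0 | him
    · subst hi0
      have s : CellStep (Qm m) (⟨0, hi⟩, ⟨1, hj⟩) (⟨0, by omega⟩, ⟨0, by omega⟩) :=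
        step_mk _ _ _ _ (Or.inr (Or.inl ⟨rfl, Or.inl rfl⟩)) (Or.inl rfl)
          (Or.inl ⟨rfl, Or.inr rfl⟩)
      exact Relation.ReflTransGen.head s Relation.ReflTransGen.refl
    · have s : CellStep (Qm m) (⟨i, hi⟩, ⟨1, hj⟩) (⟨i, hi⟩, ⟨0, by omega⟩) :=
        step_mk _ _ _ _ (Or.inr (Or.inl ⟨rfl, Or.inr him⟩)) (Or.inl rfl)
          (Or.inl ⟨rfl, Or.inr rfl⟩)
      exact Relation.ReflTransGen.head s (reach_col hm i i hi le_rfl)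
  · rcases hsum with hsm | hsm1
    · exact reach_stair hm m i j hi hj h2 hsm (by omega)
    · by_cases hj2 : j = 2
      · subst hj2
        have him : i = m - 1 := by omega
        have s2 : CellStep (Qm m) (⟨i, hi⟩, ⟨2, hj⟩) (⟨i, hi⟩, ⟨1, by omega⟩) :=
          step_mk _ _ _ _ (Or.inr (Or.inr ⟨h2, Or.inr hsm1⟩))
            (Or.inr (Or.inl ⟨rfl, Or.inr him⟩)) (Or.inl ⟨rfl, Or.inr rfl⟩)
        have s3 : CellStep (Qm m) (⟨i, hi⟩, ⟨1, by omega⟩) (⟨i, hi⟩, ⟨0, by omega⟩) :=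
          step_mk _ _ _ _ (Or.inr (Or.inl ⟨rfl, Or.inr him⟩)) (Or.inl rfl)
            (Or.inl ⟨rfl, Or.inr rfl⟩)
        exact Relation.ReflTransGen.head s2 (Relation.ReflTransGen.head s3
          (reach_col hm i i hi le_rfl))
      · have s : CellStep (Qm m) (⟨i, hi⟩, ⟨j, hj⟩) (⟨i, hi⟩, ⟨j-1, by omega⟩) :=
          step_mk _ _ _ _ (Or.inr (Or.inr ⟨h2, Or.inr hsm1⟩))
            (Or.inr (Or.inr ⟨by omega, Or.inl (by omega)⟩)) (Or.inl ⟨rfl, Or.inr (by omega)⟩)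
        exact Relation.ReflTransGen.head s
          (reach_stair hm m i (j-1) hi (by omega) (by omega) (by omega) (by omega))

lemma Q_conn {m : ℕ} (hm : 5 ≤ m) :
    ∀ u v : Fin m × Fin (m+1), Qm m u.1 u.2 = true → Qm m v.1 v.2 = true →
      Relation.ReflTransGen (CellStep (Qm m)) u v := by
  have hsym : Symmetric (CellStep (Qm m)) := by
    rintro a b ⟨h1, h2, h3⟩
    exact ⟨h2, h1, by unfold CellAdj at h3 ⊢; tauto⟩
  intro u v hu hv
  exact (reach_all hm u.1 u.2 hu).trans
    ((@Relation.ReflTransGen.stdSymm _ _ ⟨hsym⟩).symm _ _ (reach_all hm v.1 v.2 hv))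

lemma Q_poly {m : ℕ} (hm : 5 ≤ m) : IsPolyomino (Qm m) := by
  refine ⟨by omega, by omega,
    ⟨⟨0, by omega⟩, ⟨0, by omega⟩, Qm_true.mpr (Or.inl rfl)⟩,
    Q_conn hm,
    ⟨⟨0, by omega⟩, ⟨0, by omega⟩, rfl, Qm_true.mpr (Or.inl rfl)⟩,
    ⟨⟨m-1, by omega⟩, ⟨0, by omega⟩, rfl, Qm_true.mpr (Or.inl rfl)⟩,
    ⟨⟨0, by omega⟩, ⟨0, by omega⟩, rfl, Qm_true.mpr (Or.inl rfl)⟩,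
    ⟨⟨0, by omega⟩, ⟨m, by omega⟩, by dsimp only; omega,
      Qm_true.mpr (by unfold Pm; dsimp only; omega)⟩⟩

lemma M19_in_Q {m : ℕ} (hm : 5 ≤ m) : IsSubmatrix M19 (Qm m) := by
  refine ⟨fun i => ⟨i.val, by have := i.isLt; omega⟩,
    fun j => ⟨if (j : ℕ) = 3 then m else j.val, by have := j.isLt; split_ifs <;> omega⟩,
    fun a b hab => hab, ?_, ?_⟩
  · intro a b hab
    have h : (a : ℕ) < b := hab
    have ha := a.isLt; have hb := b.isLt
    show (⟨_, _⟩ : Fin (m+1)) < ⟨_, _⟩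
    rw [Fin.lt_def]
    dsimp only
    split_ifs <;> omega
  · intro i j
    fin_cases i <;> fin_cases j <;>
      first
        | exact ((by decide : M19 _ _ = true).trans
            (Qm_true.mpr (by unfold Pm; dsimp only; first | omega | (norm_num <;> omega))).symm)
        | exact ((by decide : M19 _ _ = false).trans
            (Qm_false.mpr (by unfold Pm; dsimp only; first | omega | (norm_num <;> omega))).symm)

lemma Q_min {m : ℕ} (hm : 5 ≤ m) :
    ∀ (p q : ℕ) (A : Fin p → Fin q → Bool),
      IsPolyomino A → IsSubmatrix A (Qm m) → (p < m ∨ q < m + 1) → ¬ IsSubmatrix M19 A := by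
  rintro p q A hA ⟨r, c, hr, hc, hAQ⟩ hlt ⟨r', c', hr', hc', hMA⟩
  obtain ⟨-, -, -, hconn, -⟩ := hA
  have hPm : ∀ (i : Fin p) (x : Fin q), A i x = true → Pm m (r i).val (c x).val := by
    intro i x h
    have h2 : Qm m (r i) (c x) = true := by rw [← hAQ]; exact h
    exact Qm_true.mp h2
  have hocc : ∀ (i : Fin 2) (j : Fin 4), M19 i j = Qm m (r (r' i)) (c (c' j)) := by
    intro i j; rw [hMA i j, hAQ]
  have hAtrue : ∀ (i : Fin 2) (j : Fin 4), M19 i j = true → A (r' i) (c' j) = true := by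
    intro i j h; rw [← hMA]; exact h
  have hT : ∀ (i : Fin 2) (j : Fin 4), M19 i j = true → Pm m (r (r' i)).val (c (c' j)).val :=
    fun i j h => Qm_true.mp (by rw [← hocc i j]; exact h)
  have hF : ∀ (i : Fin 2) (j : Fin 4), M19 i j = false → ¬ Pm m (r (r' i)).val (c (c' j)).val :=
    fun i j h => Qm_false.mp (by rw [← hocc i j]; exact h)
  have h00 := hT 0 0 (by decide)
  have h01 := hT 0 1 (by decide)
  have h02 := hF 0 2 (by decide)
  have h03 := hT 0 3 (by decide)
  have h10 := hT 1 0 (by decide)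
  have h11 := hF 1 1 (by decide)
  have h12 := hF 1 2 (by decide)
  have h13 := hT 1 3 (by decide)
  have hab : (r (r' 0)).val < (r (r' 1)).val := Fin.lt_def.mp (hr (hr' (by decide)))
  have hg12 : (c (c' 0)).val < (c (c' 1)).val := Fin.lt_def.mp (hc (hc' (by decide)))
  have hg23 : (c (c' 1)).val < (c (c' 2)).val := Fin.lt_def.mp (hc (hc' (by decide)))
  have hg34 : (c (c' 2)).val < (c (c' 3)).val := Fin.lt_def.mp (hc (hc' (by decide)))
  have hclass : (r (r' 0)).val = 0 ∧ (r (r' 1)).val = 1 ∧ (c (c' 0)).val = 0 ∧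
      (c (c' 1)).val = 1 ∧ (c (c' 3)).val = m ∧ 2 ≤ (c (c' 2)).val ∧ (c (c' 2)).val ≤ m - 2 := by
    have b1 := (r (r' 1)).isLt
    have b4 := (c (c' 3)).isLt
    unfold Pm at h00 h01 h02 h03 h10 h11 h12 h13
    omega
  obtain ⟨ha0, hb1, hcv0, hcv1, hc3m, hg3lo, hg3hi⟩ := hclass
  have ht1 : A (r' 0) (c' 1) = true := hAtrue 0 1 (by decide)
  have ht3 : A (r' 0) (c' 3) = true := hAtrue 0 3 (by decide)
  have ht0 : A (r' 0) (c' 0) = true := hAtrue 0 0 (by decide)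
  -- columns are surjective
  have hcsurj : Function.Surjective c := by
    by_contra hns
    simp only [Function.Surjective, not_forall] at hns
    obtain ⟨j0, hj0⟩ := hns
    push_neg at hj0
    have hne : ∀ y : Fin q, (c y).val ≠ j0.val := fun y h => hj0 y (Fin.ext h)
    have hj2 : 2 ≤ j0.val := by have e0 := hne (c' 0); have e1 := hne (c' 1); omega
    have hjm : j0.val ≤ m - 1 := by have e3 := hne (c' 3); have := j0.isLt; omega
    have hjg3 : j0.val ≠ (c (c' 2)).val := fun h => (hne (c' 2)) h.symm
    have hconsec : ∀ (x y : Fin q), (y : ℕ) = (x : ℕ) + 1 →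
        ∀ w : Fin q, (c x).val < (c w).val → (c w).val < (c y).val → False := by
      intro x y hxy w hw1 hw2
      have hxw : x < w := hc.lt_iff_lt.mp (Fin.lt_def.mpr hw1)
      have hwy : w < y := hc.lt_iff_lt.mp (Fin.lt_def.mpr hw2)
      have e1 := Fin.lt_def.mp hxw
      have e2 := Fin.lt_def.mp hwy
      omega
    have haux : ∀ (i : Fin p) (x y : Fin q), (y : ℕ) = (x : ℕ) + 1 →
        A i x = true → A i y = true → ((c x).val < j0.val ↔ (c y).val < j0.val) := by
      intro i x y hxy hax hay
      have hx := hPm i x hax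
      have hy := hPm i y hay
      have hxlty : (c x).val < (c y).val :=
        Fin.lt_def.mp (hc (Fin.lt_def.mpr (by omega)))
      have hnex := hne x
      have hney := hne y
      constructor
      · intro h1
        by_contra h2
        push_neg at h2
        have hb1' : ¬ ((c x).val < (c (c' 1)).val ∧ (c (c' 1)).val < (c y).val) :=
          fun hh => hconsec x y hxy (c' 1) hh.1 hh.2
        have hb3' : ¬ ((c x).val < (c (c' 2)).val ∧ (c (c' 2)).val < (c y).val) :=
          fun hh => hconsec x y hxy (c' 2) hh.1 hh.2
        have hcym := (c y).isLt
        unfold Pm at hx hy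
        omega
      · intro h2; omega
    have hmono : ∀ u v : Fin p × Fin q, Relation.ReflTransGen (CellStep A) u v →
        ((c u.2).val < j0.val ↔ (c v.2).val < j0.val) := by
      intro u v h
      induction h with
      | refl => exact Iff.rfl
      | @tail b d h1 h2 ih =>
        refine ih.trans ?_
        obtain ⟨hu, hv, hadj⟩ := h2
        rcases hadj with ⟨hrow, hcol⟩ | ⟨hcoleq, -⟩
        · have hre : b.1 = d.1 := Fin.ext hrow
          have hv' : A b.1 d.2 = true := by rw [hre]; exact hv
          rcases hcol with h | h
          · exact haux b.1 b.2 d.2 (by omega) hu hv'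
          · exact (haux b.1 d.2 b.2 (by omega) hv' hu).symm
        · have hce : b.2 = d.2 := Fin.ext hcoleq
          rw [hce]
    have hpath := hconn (r' 0, c' 1) (r' 0, c' 3) ht1 ht3
    have hres := (hmono _ _ hpath).mp (by dsimp only; omega)
    dsimp only at hres
    omega
  have hq : q = m + 1 := by
    have hcard := Fintype.card_of_bijective ⟨hc.injective, hcsurj⟩
    simpa using hcard
  -- rows are surjective
  have hrsurj : Function.Surjective r := by
    by_contra hns
    simp only [Function.Surjective, not_forall] at hns
    obtain ⟨i0, hi0⟩ := hns
    push_neg at hi0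
    have hner : ∀ z : Fin p, (r z).val ≠ i0.val := fun z h => hi0 z (Fin.ext h)
    have hi02 : 2 ≤ i0.val := by have e0 := hner (r' 0); have e1 := hner (r' 1); omega
    have hi0m := i0.isLt
    have hcstep : ∀ (x y : Fin q), (y : ℕ) = (x : ℕ) + 1 → (c y).val = (c x).val + 1 := by
      intro x y hxy
      have hxlty : (c x).val < (c y).val :=
        Fin.lt_def.mp (hc (Fin.lt_def.mpr (by omega)))
      by_contra hne2
      have hlt : (c x).val + 1 < m + 1 := by have := (c y).isLt; omega
      obtain ⟨z, hz⟩ := hcsurj ⟨(c x).val + 1, hlt⟩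
      have hzval : (c z).val = (c x).val + 1 := by rw [hz]
      have h1 : x < z := hc.lt_iff_lt.mp (Fin.lt_def.mpr (by omega))
      have h2 : z < y := hc.lt_iff_lt.mp (Fin.lt_def.mpr (by omega))
      have e1 := Fin.lt_def.mp h1
      have e2 := Fin.lt_def.mp h2
      omega
    have haux2 : ∀ (i : Fin p) (x y : Fin q), (y : ℕ) = (x : ℕ) + 1 →
        A i x = true → A i y = true →
        (((c x).val ≤ 1 ∨ i0.val < (r i).val) ↔ ((c y).val ≤ 1 ∨ i0.val < (r i).val)) := by
      intro i x y hxy hax hay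
      have hx := hPm i x hax
      have hy := hPm i y hay
      have hcy := hcstep x y hxy
      have hii := hner i
      have him := (r i).isLt
      unfold Pm at hx hy
      omega
    have hvert : ∀ (x : Fin q) (i i' : Fin p), (i' : ℕ) = (i : ℕ) + 1 →
        A i x = true → A i' x = true →
        (((c x).val ≤ 1 ∨ i0.val < (r i).val) ↔ ((c x).val ≤ 1 ∨ i0.val < (r i').val)) := by
      intro x i i' hii' hax hax'
      have hx := hPm i x hax
      have hx' := hPm i' x hax'
      have hrne : (r i).val ≠ (r i').val := by
        intro h
        have hieq : i = i' := hr.injective (Fin.ext h)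
        have := congrArg Fin.val hieq
        omega
      have e1 := hner i
      have e2 := hner i'
      unfold Pm at hx hx'
      omega
    have hmono2 : ∀ u v : Fin p × Fin q, Relation.ReflTransGen (CellStep A) u v →
        (((c u.2).val ≤ 1 ∨ i0.val < (r u.1).val) ↔
          ((c v.2).val ≤ 1 ∨ i0.val < (r v.1).val)) := by
      intro u v h
      induction h with
      | refl => exact Iff.rfl
      | @tail b d h1 h2 ih =>
        refine ih.trans ?_
        obtain ⟨hu, hv, hadj⟩ := h2
        rcases hadj with ⟨hrow, hcol⟩ | ⟨hcoleq, hradj⟩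
        · have hre : b.1 = d.1 := Fin.ext hrow
          have hv' : A b.1 d.2 = true := by rw [hre]; exact hv
          rw [← hre]
          rcases hcol with h | h
          · exact haux2 b.1 b.2 d.2 (by omega) hu hv'
          · exact (haux2 b.1 d.2 b.2 (by omega) hv' hu).symm
        · have hce : b.2 = d.2 := Fin.ext hcoleq
          have hv' : A d.1 b.2 = true := by rw [hce]; exact hv
          rw [← hce]
          rcases hradj with h | h
          · exact hvert b.2 b.1 d.1 (by omega) hu hv'
          · exact (hvert b.2 d.1 b.1 (by omega) hv' hu).symm
    have hpath0 := hconn (r' 0, c' 0) (r' 0, c' 3) ht0 ht3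
    have hres := (hmono2 _ _ hpath0).mp (by dsimp only; omega)
    dsimp only at hres
    omega
  have hp : p = m := by
    have hcard := Fintype.card_of_bijective ⟨hr.injective, hrsurj⟩
    simpa using hcard
  omega

/-- There are arbitrarily large polyominoes `Q` containing `M19`
as a submatrix all of whose proper polyomino submatrices avoid `M19`; hence
the polyomino class `Av(M19)` has an infinite polyomino-basis. -/
theorem stmt_19 :
    ∀ N : ℕ, ∃ (m n : ℕ) (Q : Fin m → Fin n → Bool),
      IsPolyomino Q ∧ IsSubmatrix M19 Q ∧
      (∀ (p q : ℕ) (A : Fin p → Fin q → Bool),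
        IsPolyomino A → IsSubmatrix A Q → (p < m ∨ q < n) → ¬ IsSubmatrix M19 A) ∧
      N < m + n := by
  intro N
  exact ⟨N + 5, N + 6, Qm (N + 5), Q_poly (by omega), M19_in_Q (by omega),
    Q_min (by omega), by omega⟩
end
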